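/- Let s_{ij} ∈ {−1, +1} be the sign of the semi-partial correlation ρ_{ij(1,...,i-1)}. Define the lower-triangular matrix L by L_{jj} = sqrt(det(R_j)/det(R_{j-1})) and, for j > i, L_{ji} = s_{ij} · sqrt(det(R_i^{*j})/det(R_{i-1}) − det(R_{i+1}^{*j})/det(R_i)). Then L L^T = R. -/

import Mathlib

open Matrix

/-- Leading `i × i` principal submatrix. -/
def lead {n : ℕ} (R : Matrix (Fin n) (Fin n) ℝ) (i : ℕ) (h : i ≤ n) :
    Matrix (Fin i) (Fin i) ℝ :=
  R.submatrix (Fin.castLE h) (Fin.castLE h)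

/-- First `i` entries of column `j` of `R`. -/
def colv {n : ℕ} (R : Matrix (Fin n) (Fin n) ℝ) (i : ℕ) (h : i ≤ n) (j : Fin n) :
    Fin i → ℝ :=
  fun k => R (Fin.castLE h k) j


/-- The bordered matrix `R_{i+1}^{*j}` (0-indexed size parameter `i`):
`[[R_i, (ρ_{i+1}^{*j})ᵀ], [ρ_{i+1}^{*j}, 1]]`, i.e. the leading `i × i`
submatrix bordered by the first `i` entries of column `j` with corner `1`. -/
def brd {n : ℕ} (R : Matrix (Fin n) (Fin n) ℝ) (i : ℕ) (h : i ≤ n) (j : Fin n) :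
    Matrix (Fin (i + 1)) (Fin (i + 1)) ℝ :=
  Matrix.of fun k l =>
    if hk : (k : ℕ) < i then
      if hl : (l : ℕ) < i then R ⟨k, lt_of_lt_of_le hk h⟩ ⟨l, lt_of_lt_of_le hl h⟩
      else R ⟨k, lt_of_lt_of_le hk h⟩ j
    else if hl : (l : ℕ) < i then R ⟨l, lt_of_lt_of_le hl h⟩ j
    else 1

/-- The semi-partial correlation coefficient `ρ_{k+1,j(1,…,k)}` (0-indexed `k`,
0-indexed column `j`):
`(R_{kj} − ρ_k^{*j} R_{k−1}⁻¹ ρ_kᵀ)/√(1 − ρ_k R_{k−1}⁻¹ ρ_kᵀ)`. -/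
noncomputable def spc {n : ℕ} (R : Matrix (Fin n) (Fin n) ℝ) (k : ℕ) (hk : k < n)
    (j : Fin n) : ℝ :=
  (R ⟨k, hk⟩ j - colv R k hk.le j ⬝ᵥ (lead R k hk.le)⁻¹ *ᵥ colv R k hk.le ⟨k, hk⟩) /
    Real.sqrt
      (1 - colv R k hk.le ⟨k, hk⟩ ⬝ᵥ (lead R k hk.le)⁻¹ *ᵥ colv R k hk.le ⟨k, hk⟩)
private lemma sum_split {n m : ℕ} (h : m ≤ n) (F : Fin n → ℝ)
    (hF : ∀ k : Fin n, m ≤ (k : ℕ) → F k = 0) :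
    ∑ k : Fin n, F k = ∑ k : Fin m, F (Fin.castLE h k) := by
  classical
  let e' : Fin m ⊕ Fin (n - m) ≃ Fin n :=
    finSumFinEquiv.trans (finCongr (Nat.add_sub_cancel' h))
  rw [← Equiv.sum_comp e' F, Fintype.sum_sum_type]
  have h1 : ∀ i : Fin m, e' (Sum.inl i) = Fin.castLE h i := fun i =>
    Fin.ext (by simp [e'])
  have h2 : ∀ i : Fin (n - m), F (e' (Sum.inr i)) = 0 := fun i =>
    hF _ (by simp [e'])
  simp [h1, h2]

private lemma key_detFB {m : ℕ} (A : Matrix (Fin m) (Fin m) ℝ) (hA : IsUnit A.det)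
    (v : Fin m → ℝ) :
    (fromBlocks A (replicateCol (Fin 1) v) (replicateRow (Fin 1) v) (1 : Matrix (Fin 1) (Fin 1) ℝ)).det
      = A.det * (1 - v ⬝ᵥ A⁻¹ *ᵥ v) := by
  letI := A.invertibleOfIsUnitDet hA
  rw [det_fromBlocks₁₁, invOf_eq_nonsing_inv]
  congr 1
  rw [show ((1 : Matrix (Fin 1) (Fin 1) ℝ) - replicateRow (Fin 1) v * A⁻¹ * replicateCol (Fin 1) v).det
      = ((1 : Matrix (Fin 1) (Fin 1) ℝ) - replicateRow (Fin 1) v * A⁻¹ * replicateCol (Fin 1) v) 0 0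
    from det_fin_one _]
  simp only [Matrix.sub_apply, one_apply_eq, Matrix.mul_apply, replicateRow_apply, replicateCol_apply,
    dotProduct, mulVec, Finset.sum_mul, Finset.mul_sum]
  congr 1
  rw [Finset.sum_comm]
  exact Finset.sum_congr rfl fun y _ => Finset.sum_congr rfl fun x _ => by ring

private lemma scalar_aux1 (p q b d : ℝ) (hd : d ≠ 0) (hq : q = 1 - d) :
    p - (b - p) / d * q + (b - p) / d = b := by
  subst hq; field_simp; ring

private lemma scalar_aux2 (x c p a b d : ℝ) (hd : d ≠ 0) :
    x - (b - p) / d * c + a * ((b - p) / d) = x + (a - c) * (b - p) / d := by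
  field_simp; ring

private lemma key_dot {m : ℕ} (A : Matrix (Fin m) (Fin m) ℝ) (hA : IsUnit A.det)
    (hAs : A⁻¹ᵀ = A⁻¹) (v u₀ w₀ : Fin m → ℝ) (a b : ℝ)
    (hd : 1 - v ⬝ᵥ A⁻¹ *ᵥ v ≠ 0) :
    (Sum.elim u₀ (fun _ => a)) ⬝ᵥ
        (fromBlocks A (replicateCol (Fin 1) v) (replicateRow (Fin 1) v) (1 : Matrix (Fin 1) (Fin 1) ℝ))⁻¹ *ᵥ
        (Sum.elim w₀ (fun _ => b))
      = u₀ ⬝ᵥ A⁻¹ *ᵥ w₀ +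
        (a - v ⬝ᵥ A⁻¹ *ᵥ u₀) * (b - v ⬝ᵥ A⁻¹ *ᵥ w₀) / (1 - v ⬝ᵥ A⁻¹ *ᵥ v) := by
  have hsym : u₀ ⬝ᵥ A⁻¹ *ᵥ v = v ⬝ᵥ A⁻¹ *ᵥ u₀ := by
    rw [dotProduct_mulVec]
    nth_rewrite 1 [← hAs]
    rw [vecMul_transpose]
    exact dotProduct_comm (A⁻¹ *ᵥ u₀) v
  obtain ⟨β, hβ⟩ : ∃ β : ℝ, β = (b - v ⬝ᵥ A⁻¹ *ᵥ w₀) / (1 - v ⬝ᵥ A⁻¹ *ᵥ v) := ⟨_, rfl⟩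
  obtain ⟨z₀, hz₀⟩ : ∃ z₀ : Fin m → ℝ, z₀ = A⁻¹ *ᵥ w₀ - β • (A⁻¹ *ᵥ v) := ⟨_, rfl⟩
  have hFBdet :
      IsUnit (fromBlocks A (replicateCol (Fin 1) v) (replicateRow (Fin 1) v)
        (1 : Matrix (Fin 1) (Fin 1) ℝ)).det := by
    rw [key_detFB A hA v]
    exact hA.mul (isUnit_iff_ne_zero.mpr hd)
  have hvz : v ⬝ᵥ z₀ + β = b := by
    rw [hz₀, dotProduct_sub, dotProduct_smul, smul_eq_mul, hβ]
    exact scalar_aux1 _ _ _ _ hd (by ring)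
  have hz : fromBlocks A (replicateCol (Fin 1) v) (replicateRow (Fin 1) v) (1 : Matrix (Fin 1) (Fin 1) ℝ) *ᵥ
      Sum.elim z₀ (fun _ => β) = Sum.elim w₀ (fun _ => b) := by
    rw [fromBlocks_mulVec]
    have e1 : Sum.elim z₀ (fun _ : Fin 1 => β) ∘ Sum.inl = z₀ := rfl
    have e2 : Sum.elim z₀ (fun _ : Fin 1 => β) ∘ Sum.inr = fun _ => β := rfl
    rw [e1, e2]
    have h1 : A *ᵥ z₀ + replicateCol (Fin 1) v *ᵥ (fun _ : Fin 1 => β) = w₀ := by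
      have hA1 : A *ᵥ z₀ = w₀ - β • v := by
        rw [hz₀, mulVec_sub, mulVec_smul, mulVec_mulVec, mulVec_mulVec,
          Matrix.mul_nonsing_inv _ hA, one_mulVec, one_mulVec]
      have hcol : replicateCol (Fin 1) v *ᵥ (fun _ : Fin 1 => β) = β • v := by
        funext i
        simp [mulVec, dotProduct]
        ring
      rw [hA1, hcol]
      abel
    have h2 : replicateRow (Fin 1) v *ᵥ z₀ + (1 : Matrix (Fin 1) (Fin 1) ℝ) *ᵥ (fun _ : Fin 1 => β)
        = fun _ : Fin 1 => b := by
      rw [one_mulVec]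
      funext i
      have hrow : (replicateRow (Fin 1) v *ᵥ z₀) i = v ⬝ᵥ z₀ := by simp [mulVec, dotProduct]
      simp only [Pi.add_apply, hrow]
      exact hvz
    rw [h1, h2]
  have hsolve : (fromBlocks A (replicateCol (Fin 1) v) (replicateRow (Fin 1) v)
        (1 : Matrix (Fin 1) (Fin 1) ℝ))⁻¹ *ᵥ Sum.elim w₀ (fun _ : Fin 1 => b)
      = Sum.elim z₀ (fun _ => β) := by
    rw [← hz, mulVec_mulVec, nonsing_inv_mul _ hFBdet, one_mulVec]
  have hfin : (fun _ : Fin 1 => a) ⬝ᵥ (fun _ : Fin 1 => β) = a * β := by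
    simp [dotProduct]
  rw [hsolve, sumElim_dotProduct_sumElim, hz₀, dotProduct_sub, dotProduct_smul,
    smul_eq_mul, hsym, hfin, hβ]
  exact scalar_aux2 _ _ _ _ _ _ hd

noncomputable def gq {n : ℕ} (R : Matrix (Fin n) (Fin n) ℝ) (m : ℕ) (h : m ≤ n)
    (j j' : Fin n) : ℝ :=
  colv R m h j ⬝ᵥ (lead R m h)⁻¹ *ᵥ colv R m h j'

private lemma Rsymm {n : ℕ} {R : Matrix (Fin n) (Fin n) ℝ} (hR : R.PosDef) :
    ∀ a b : Fin n, R a b = R b a := by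
  intro a b
  have h := congrFun (congrFun hR.isHermitian b) a
  simpa using h

private lemma lead_posDef {n : ℕ} {R : Matrix (Fin n) (Fin n) ℝ} (hR : R.PosDef)
    (m : ℕ) (h : m ≤ n) : (lead R m h).PosDef := by
  classical
  refine PosDef.of_dotProduct_mulVec_pos (hR.isHermitian.submatrix _) fun x hx => ?_
  obtain ⟨y, hy⟩ : ∃ y : Fin n → ℝ, y = fun k : Fin n =>
      if hk : (k : ℕ) < m then x ⟨k, hk⟩ else 0 := ⟨_, rfl⟩
  have hyc : ∀ k : Fin m, y (Fin.castLE h k) = x k := by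
    intro k
    rw [hy]
    simp [k.isLt]
  have hy0 : ∀ k : Fin n, m ≤ (k : ℕ) → y k = 0 := by
    intro k hk
    rw [hy]
    simp [Nat.not_lt.mpr hk]
  have hyne : y ≠ 0 := by
    intro hc
    apply hx
    funext k
    have h2 := congrFun hc (Fin.castLE h k)
    rw [hyc k] at h2
    exact h2
  have key : x ⬝ᵥ (lead R m h) *ᵥ x = y ⬝ᵥ R *ᵥ y := by
    rw [show y ⬝ᵥ R *ᵥ y = ∑ k : Fin n, y k * (R *ᵥ y) k from rfl]
    rw [sum_split h _ (fun k hk => by rw [hy0 k hk, zero_mul])]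
    refine Finset.sum_congr rfl fun k _ => ?_
    rw [hyc]
    congr 1
    rw [show (R *ᵥ y) (Fin.castLE h k) = ∑ l : Fin n, R (Fin.castLE h k) l * y l from rfl]
    rw [sum_split h _ (fun l hl => by rw [hy0 l hl, mul_zero])]
    rw [show (lead R m h *ᵥ x) k = ∑ l : Fin m, lead R m h k l * x l from rfl]
    refine Finset.sum_congr rfl fun l _ => ?_
    rw [hyc]
    rfl
  have hpos := hR.dotProduct_mulVec_pos hyne
  simp only [star_trivial] at hpos ⊢
  rw [key]
  exact hpos

private lemma lead_inv_symm {n : ℕ} {R : Matrix (Fin n) (Fin n) ℝ} (hR : R.PosDef)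
    (m : ℕ) (h : m ≤ n) : ((lead R m h)⁻¹)ᵀ = (lead R m h)⁻¹ := by
  have hh := (hR.isHermitian.submatrix (Fin.castLE h)).inv
  ext i j
  have h2 := congrFun (congrFun hh i) j
  simpa [lead] using h2

private lemma gq_symm {n : ℕ} {R : Matrix (Fin n) (Fin n) ℝ} (hR : R.PosDef)
    (m : ℕ) (h : m ≤ n) (j j' : Fin n) : gq R m h j j' = gq R m h j' j := by
  show colv R m h j ⬝ᵥ (lead R m h)⁻¹ *ᵥ colv R m h j'
      = colv R m h j' ⬝ᵥ (lead R m h)⁻¹ *ᵥ colv R m h j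
  rw [dotProduct_mulVec]
  nth_rewrite 1 [← lead_inv_symm hR m h]
  rw [vecMul_transpose]
  exact dotProduct_comm ((lead R m h)⁻¹ *ᵥ colv R m h j) (colv R m h j')

private lemma brd_sub {n : ℕ} (R : Matrix (Fin n) (Fin n) ℝ) (m : ℕ) (h : m ≤ n)
    (j : Fin n) :
    brd R m h j = (fromBlocks (lead R m h) (replicateCol (Fin 1) (colv R m h j))
        (replicateRow (Fin 1) (colv R m h j)) (1 : Matrix (Fin 1) (Fin 1) ℝ)).submatrix
      finSumFinEquiv.symm finSumFinEquiv.symm := by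
  have h0 : (brd R m h j).submatrix finSumFinEquiv finSumFinEquiv
      = fromBlocks (lead R m h) (replicateCol (Fin 1) (colv R m h j))
        (replicateRow (Fin 1) (colv R m h j)) (1 : Matrix (Fin 1) (Fin 1) ℝ) := by
    ext k l
    cases k with
    | inl k =>
      cases l with
      | inl l =>
        simp [brd, lead, colv, k.isLt, l.isLt]
        rfl
      | inr l =>
        simp [brd, lead, colv, k.isLt]
        rfl
    | inr k =>
      cases l with
      | inl l =>
        simp [brd, lead, colv, l.isLt]
        rfl
      | inr l =>
        have hkl : k = l := Subsingleton.elim k l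
        subst hkl
        simp [brd, lead, colv, Matrix.one_apply_eq]
  rw [← h0, submatrix_submatrix, Equiv.self_comp_symm, submatrix_id_id]

private lemma det_brd {n : ℕ} {R : Matrix (Fin n) (Fin n) ℝ} (hR : R.PosDef)
    (m : ℕ) (h : m ≤ n) (j : Fin n) :
    (brd R m h j).det = (lead R m h).det * (1 - gq R m h j j) := by
  rw [brd_sub, det_submatrix_equiv_self,
    key_detFB _ (lead_posDef hR m h).det_pos.ne'.isUnit]
  rfl

private lemma lead_succ {n : ℕ} {R : Matrix (Fin n) (Fin n) ℝ} (hR : R.PosDef)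
    (hdiag : ∀ k, R k k = 1) (m : ℕ) (hm : m < n) :
    lead R (m + 1) hm = brd R m (Nat.le_of_lt hm) ⟨m, hm⟩ := by
  ext k l
  show R (Fin.castLE hm k) (Fin.castLE hm l) = _
  by_cases hk : (k : ℕ) < m <;> by_cases hl : (l : ℕ) < m
  · simp [brd, hk, hl]
    rfl
  · have hlm : (l : ℕ) = m := by omega
    simp [brd, hk, hl]
    congr 1
    exact Fin.ext hlm
  · have hkm : (k : ℕ) = m := by omega
    simp [brd, hk, hl]
    rw [Rsymm hR]
    congr 1
    exact Fin.ext hkm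
  · have hkm : (k : ℕ) = m := by omega
    have hlm : (l : ℕ) = m := by omega
    simp [brd, hk, hl]
    rw [show Fin.castLE hm k = ⟨m, hm⟩ from Fin.ext hkm,
      show Fin.castLE hm l = ⟨m, hm⟩ from Fin.ext hlm]
    exact hdiag _

private lemma dpos {n : ℕ} {R : Matrix (Fin n) (Fin n) ℝ} (hR : R.PosDef)
    (hdiag : ∀ k, R k k = 1) (m : ℕ) (hm : m < n) :
    0 < 1 - gq R m (Nat.le_of_lt hm) ⟨m, hm⟩ ⟨m, hm⟩ := by
  have h1 : (lead R (m + 1) hm).det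
      = (lead R m (Nat.le_of_lt hm)).det * (1 - gq R m (Nat.le_of_lt hm) ⟨m, hm⟩ ⟨m, hm⟩) := by
    rw [lead_succ hR hdiag m hm, det_brd hR m (Nat.le_of_lt hm) ⟨m, hm⟩]
  have h2 := (lead_posDef hR (m + 1) hm).det_pos
  have h3 := (lead_posDef hR m (Nat.le_of_lt hm)).det_pos
  rw [h1] at h2
  rcases mul_pos_iff.mp h2 with ⟨_, hb⟩ | ⟨ha, _⟩
  · exact hb
  · linarith

private lemma gq_rec {n : ℕ} {R : Matrix (Fin n) (Fin n) ℝ} (hR : R.PosDef)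
    (hdiag : ∀ k, R k k = 1) (m : ℕ) (hm : m < n) (j j' : Fin n) :
    gq R (m + 1) hm j j' = gq R m (Nat.le_of_lt hm) j j' +
      (R ⟨m, hm⟩ j - gq R m (Nat.le_of_lt hm) ⟨m, hm⟩ j) *
        (R ⟨m, hm⟩ j' - gq R m (Nat.le_of_lt hm) ⟨m, hm⟩ j') /
        (1 - gq R m (Nat.le_of_lt hm) ⟨m, hm⟩ ⟨m, hm⟩) := by
  have hcomp : ∀ jj : Fin n, colv R (m + 1) hm jj ∘ finSumFinEquiv
      = Sum.elim (colv R m (Nat.le_of_lt hm) jj) (fun _ => R ⟨m, hm⟩ jj) := by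
    intro jj
    funext sidx
    cases sidx with
    | inl i => rfl
    | inr i =>
      show R (Fin.castLE hm (finSumFinEquiv (Sum.inr i))) jj = R ⟨m, hm⟩ jj
      congr 1
      exact Fin.ext (by simp [Fin.eq_zero i])
  show colv R (m + 1) hm j ⬝ᵥ (lead R (m + 1) hm)⁻¹ *ᵥ colv R (m + 1) hm j' = _
  rw [lead_succ hR hdiag m hm, brd_sub, inv_submatrix_equiv, submatrix_mulVec_equiv,
    Equiv.symm_symm, dotProduct_comp_equiv_symm _ _ finSumFinEquiv, hcomp j, hcomp j',
    key_dot _ (lead_posDef hR m (Nat.le_of_lt hm)).det_pos.ne'.isUnit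
      (lead_inv_symm hR m (Nat.le_of_lt hm)) _ _ _ _ _
      (dpos hR hdiag m hm).ne']
  rfl

private lemma gq_last {n : ℕ} {R : Matrix (Fin n) (Fin n) ℝ} (hR : R.PosDef)
    (j j' : Fin n) :
    gq R ((j : ℕ) + 1) j.isLt j' j = R j j' := by
  have h' : (j : ℕ) + 1 ≤ n := j.isLt
  have hcol : colv R ((j : ℕ) + 1) j.isLt j
      = lead R ((j : ℕ) + 1) j.isLt *ᵥ
        Pi.single (⟨(j : ℕ), Nat.lt_succ_self _⟩ : Fin ((j : ℕ) + 1)) 1 := by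
    rw [mulVec_single]
    funext k
    show R (Fin.castLE j.isLt k) j
        = R (Fin.castLE j.isLt k) (Fin.castLE j.isLt ⟨(j : ℕ), Nat.lt_succ_self _⟩) * 1
    rw [mul_one]
    exact congrArg _ (Fin.ext rfl)
  show colv R ((j : ℕ) + 1) j.isLt j' ⬝ᵥ
      (lead R ((j : ℕ) + 1) j.isLt)⁻¹ *ᵥ colv R ((j : ℕ) + 1) j.isLt j = R j j'
  rw [hcol, mulVec_mulVec, nonsing_inv_mul _ (lead_posDef hR _ j.isLt).det_pos.ne'.isUnit,
    one_mulVec, dotProduct_single, mul_one]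
  show R (Fin.castLE j.isLt ⟨(j : ℕ), Nat.lt_succ_self _⟩) j' = R j j'
  exact congrFun (congrArg R (Fin.ext rfl)) j'

/-- Second parametrization of the Cholesky factor: with `s i j ∈ {−1, +1}` the
sign of the semi-partial correlation `ρ_{ij(1,…,i−1)}`, the lower-triangular
matrix with `L_{jj} = √(det R_j/det R_{j−1})` and, for `i < j`,
`L_{ji} = s_{ij} √(det(R_i^{*j})/det(R_{i−1}) − det(R_{i+1}^{*j})/det(R_i))`
satisfies `L Lᵀ = R`. -/
theorem stmt8 {n : ℕ} (R : Matrix (Fin n) (Fin n) ℝ) (hR : R.PosDef)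
    (hdiag : ∀ k, R k k = 1) (s : Fin n → Fin n → ℝ)
    (hs1 : ∀ i j : Fin n, s i j = 1 ∨ s i j = -1)
    (hs2 : ∀ i j : Fin n, (i : ℕ) < (j : ℕ) → 0 ≤ s i j * spc R i i.isLt j)
    (L : Matrix (Fin n) (Fin n) ℝ)
    (hL : ∀ j i : Fin n,
      L j i =
        if (j : ℕ) = (i : ℕ) then
          Real.sqrt ((lead R ((j : ℕ) + 1) j.isLt).det / (lead R (j : ℕ) j.isLt.le).det)
        else if (i : ℕ) < (j : ℕ) then
          s i j *
            Real.sqrt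
              ((brd R (i : ℕ) i.isLt.le j).det / (lead R (i : ℕ) i.isLt.le).det -
                (brd R ((i : ℕ) + 1) i.isLt j).det / (lead R ((i : ℕ) + 1) i.isLt).det)
        else 0) :
    L * Lᵀ = R := by
  have hRsymm := Rsymm hR
  have Lform : ∀ (j : Fin n) (i : ℕ) (hi : i < n), i ≤ (j : ℕ) →
      L j ⟨i, hi⟩ = (R ⟨i, hi⟩ j - gq R i (Nat.le_of_lt hi) ⟨i, hi⟩ j) /
        Real.sqrt (1 - gq R i (Nat.le_of_lt hi) ⟨i, hi⟩ ⟨i, hi⟩) := by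
    intro j i hi hij
    have hd := dpos hR hdiag i hi
    have hdet_i := (lead_posDef hR i (Nat.le_of_lt hi)).det_pos
    rcases eq_or_lt_of_le hij with heq | hlt
    · have hj : j = ⟨i, hi⟩ := Fin.ext heq.symm
      subst hj
      rw [hL, if_pos rfl]
      show Real.sqrt ((lead R (i + 1) hi).det / (lead R i (Nat.le_of_lt hi)).det) = _
      have hdet : (lead R (i + 1) hi).det
          = (lead R i (Nat.le_of_lt hi)).det
            * (1 - gq R i (Nat.le_of_lt hi) ⟨i, hi⟩ ⟨i, hi⟩) := by
        rw [lead_succ hR hdiag i hi, det_brd hR i (Nat.le_of_lt hi) ⟨i, hi⟩]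
      rw [hdet, mul_div_cancel_left₀ _ hdet_i.ne', hdiag, Real.div_sqrt]
    · rw [hL, if_neg (show ¬((j : ℕ) = ((⟨i, hi⟩ : Fin n) : ℕ)) from by
        simp only [Fin.val_mk]
        omega), if_pos hlt]
      show s ⟨i, hi⟩ j * Real.sqrt
          ((brd R i (Nat.le_of_lt hi) j).det / (lead R i (Nat.le_of_lt hi)).det
            - (brd R (i + 1) hi j).det / (lead R (i + 1) hi).det) = _
      have hdet_s := (lead_posDef hR (i + 1) hi).det_pos
      have hxsq : (brd R i (Nat.le_of_lt hi) j).det / (lead R i (Nat.le_of_lt hi)).det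
          - (brd R (i + 1) hi j).det / (lead R (i + 1) hi).det
          = (R ⟨i, hi⟩ j - gq R i (Nat.le_of_lt hi) ⟨i, hi⟩ j) ^ 2
            / (1 - gq R i (Nat.le_of_lt hi) ⟨i, hi⟩ ⟨i, hi⟩) := by
        rw [det_brd hR i (Nat.le_of_lt hi) j, det_brd hR (i + 1) hi j,
          mul_div_cancel_left₀ _ hdet_i.ne', mul_div_cancel_left₀ _ hdet_s.ne',
          gq_rec hR hdiag i hi j j]
        ring
      rw [hxsq]
      have hsq : Real.sqrt ((R ⟨i, hi⟩ j - gq R i (Nat.le_of_lt hi) ⟨i, hi⟩ j) ^ 2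
            / (1 - gq R i (Nat.le_of_lt hi) ⟨i, hi⟩ ⟨i, hi⟩))
          = |R ⟨i, hi⟩ j - gq R i (Nat.le_of_lt hi) ⟨i, hi⟩ j|
            / Real.sqrt (1 - gq R i (Nat.le_of_lt hi) ⟨i, hi⟩ ⟨i, hi⟩) := by
        rw [Real.sqrt_div (sq_nonneg _), Real.sqrt_sq_eq_abs]
      rw [hsq]
      have hspc_eq : spc R i hi j
          = (R ⟨i, hi⟩ j - gq R i (Nat.le_of_lt hi) ⟨i, hi⟩ j) /
            Real.sqrt (1 - gq R i (Nat.le_of_lt hi) ⟨i, hi⟩ ⟨i, hi⟩) := by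
        show (R ⟨i, hi⟩ j - gq R i (Nat.le_of_lt hi) j ⟨i, hi⟩) /
            Real.sqrt (1 - gq R i (Nat.le_of_lt hi) ⟨i, hi⟩ ⟨i, hi⟩) = _
        rw [gq_symm hR i (Nat.le_of_lt hi) j ⟨i, hi⟩]
      have hspc : 0 ≤ s ⟨i, hi⟩ j * spc R i hi j := hs2 ⟨i, hi⟩ j hlt
      rw [hspc_eq] at hspc
      have hsd : 0 < Real.sqrt (1 - gq R i (Nat.le_of_lt hi) ⟨i, hi⟩ ⟨i, hi⟩) :=
        Real.sqrt_pos.mpr hd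
      have hsx : 0 ≤ s ⟨i, hi⟩ j * (R ⟨i, hi⟩ j - gq R i (Nat.le_of_lt hi) ⟨i, hi⟩ j) := by
        have h2 : s ⟨i, hi⟩ j * ((R ⟨i, hi⟩ j - gq R i (Nat.le_of_lt hi) ⟨i, hi⟩ j) /
              Real.sqrt (1 - gq R i (Nat.le_of_lt hi) ⟨i, hi⟩ ⟨i, hi⟩)) *
              Real.sqrt (1 - gq R i (Nat.le_of_lt hi) ⟨i, hi⟩ ⟨i, hi⟩)
            = s ⟨i, hi⟩ j * (R ⟨i, hi⟩ j - gq R i (Nat.le_of_lt hi) ⟨i, hi⟩ j) := by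
          field_simp
        calc (0 : ℝ) ≤ s ⟨i, hi⟩ j * ((R ⟨i, hi⟩ j - gq R i (Nat.le_of_lt hi) ⟨i, hi⟩ j) /
              Real.sqrt (1 - gq R i (Nat.le_of_lt hi) ⟨i, hi⟩ ⟨i, hi⟩)) *
              Real.sqrt (1 - gq R i (Nat.le_of_lt hi) ⟨i, hi⟩ ⟨i, hi⟩) :=
            mul_nonneg hspc hsd.le
          _ = _ := h2
      rcases hs1 ⟨i, hi⟩ j with h1 | h1
      · rw [h1, one_mul] at hsx ⊢
        rw [abs_of_nonneg hsx]
      · rw [h1] at hsx ⊢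
        rw [abs_of_nonpos (by linarith)]
        ring
  have main : ∀ m (hm : m ≤ n), ∀ j j' : Fin n, m ≤ (j : ℕ) + 1 → m ≤ (j' : ℕ) + 1 →
      (∑ i : Fin m, L j (Fin.castLE hm i) * L j' (Fin.castLE hm i)) = gq R m hm j j' := by
    intro m
    induction m with
    | zero =>
      intro hm j j' _ _
      show _ = colv R 0 hm j ⬝ᵥ (lead R 0 hm)⁻¹ *ᵥ colv R 0 hm j'
      simp [dotProduct]
    | succ m ih =>
      intro hm j j' hj hj'
      have hmn : m < n := hm
      rw [Fin.sum_univ_castSucc]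
      have hcast : ∀ i : Fin m, Fin.castLE hm i.castSucc = Fin.castLE (Nat.le_of_lt hmn) i :=
        fun i => rfl
      simp only [hcast]
      rw [ih (Nat.le_of_lt hmn) j j' (by omega) (by omega)]
      have hlast : Fin.castLE hm (Fin.last m) = (⟨m, hmn⟩ : Fin n) := rfl
      rw [hlast, Lform j m hmn (by omega), Lform j' m hmn (by omega),
        gq_rec hR hdiag m hmn j j']
      have hd := dpos hR hdiag m hmn
      rw [div_mul_div_comm, Real.mul_self_sqrt hd.le]
  ext j j'
  rw [Matrix.mul_apply]
  simp only [transpose_apply]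
  rcases le_total (j : ℕ) (j' : ℕ) with hc | hc
  · have hz : ∀ k : Fin n, (j : ℕ) + 1 ≤ (k : ℕ) → L j k * L j' k = 0 := by
      intro k hk
      rw [hL j k, if_neg (by omega), if_neg (by omega), zero_mul]
    rw [sum_split (show (j : ℕ) + 1 ≤ n from j.isLt) _ hz,
      main ((j : ℕ) + 1) j.isLt j j' le_rfl (by omega),
      gq_symm hR ((j : ℕ) + 1) j.isLt j j', gq_last hR j j']
  · have hz : ∀ k : Fin n, (j' : ℕ) + 1 ≤ (k : ℕ) → L j k * L j' k = 0 := by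
      intro k hk
      rw [hL j' k, if_neg (by omega), if_neg (by omega), mul_zero]
    rw [sum_split (show (j' : ℕ) + 1 ≤ n from j'.isLt) _ hz,
      main ((j' : ℕ) + 1) j'.isLt j j' (by omega) le_rfl,
      gq_last hR j' j]
    exact hRsymm j' j
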